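/- The symmetrized bidisc G_2 = {(μ_1+μ_2, μ_1μ_2) : μ_1, μ_2 ∈ D} (where D is the open unit disc in ℂ) intersected with any complex affine line L ⊂ ℂ² is connected whenever nonempty. -/

import Mathlib

open Metric

/-- The symmetrized bidisc. -/
def symBidisc : Set (ℂ × ℂ) :=
  {p | ∃ a b : ℂ, a ∈ ball (0 : ℂ) 1 ∧ b ∈ ball (0 : ℂ) 1 ∧ p = (a + b, a * b)}

open Complex Set ComplexConjugate

noncomputable section SymBidiscAux

lemma norm_sq_polar (ρ r θ : ℝ) :
    ‖(ρ : ℂ) + r * Complex.exp (θ * I)‖ ^ 2 = ρ^2 + r^2 + 2*ρ*r*Real.cos θ := by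
  rw [Complex.sq_norm]
  simp [Complex.normSq_apply, Complex.exp_ofReal_mul_I_re, Complex.exp_ofReal_mul_I_im]
  nlinarith [Real.sin_sq_add_cos_sq θ]

lemma sq_lt_one {a : ℝ} (ha : 0 ≤ a) (h : a^2 < 1) : a < 1 := by nlinarith

lemma arc_spec (ρ R : ℝ) (hρ : 0 ≤ ρ) (x : ℂ) (hx1 : ‖x‖ < 1) (hx2 : R < ‖x - ρ‖) :
    ∃ t : Set ℂ, IsPreconnected t ∧ (∀ w ∈ t, ‖w‖ < 1 ∧ R < ‖w - ρ‖) ∧ x ∈ t ∧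
      ((ρ : ℂ) - (‖x - ρ‖ : ℝ)) ∈ t := by
  set r : ℝ := ‖x - ρ‖ with hr
  set φ : ℝ := (x - ρ).arg with hφ
  set s : ℝ := if 0 ≤ φ then Real.pi else -Real.pi with hs
  have hr0 : 0 ≤ r := norm_nonneg _
  have hxρ : x = (ρ : ℂ) + r * Complex.exp (φ * I) := by
    have := Complex.norm_mul_exp_arg_mul_I (x - ρ)
    rw [← hr, ← hφ] at this
    linear_combination -this
  refine ⟨(fun t : ℝ => (ρ : ℂ) + r * Complex.exp (((φ + t*(s - φ) : ℝ) : ℂ) * I)) '' Icc 0 1,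
    ?_, ?_, ?_, ?_⟩
  · apply IsPreconnected.image isPreconnected_Icc
    apply Continuous.continuousOn
    fun_prop
  · rintro w ⟨t, ht, rfl⟩
    have hcos : Real.cos (φ + t*(s - φ)) ≤ Real.cos φ := by
      have hφπ : φ ≤ Real.pi := Complex.arg_le_pi _
      have hφπ' : -Real.pi < φ := Complex.neg_pi_lt_arg _
      rcases le_or_gt 0 φ with h0 | h0
      · have hs' : s = Real.pi := by simp [hs, h0]
        rw [hs']
        apply Real.cos_le_cos_of_nonneg_of_le_pi h0
        · nlinarith [ht.1, ht.2]
        · nlinarith [ht.1, ht.2]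
      · have hs' : s = -Real.pi := by simp [hs, not_le.mpr h0]
        rw [hs']
        have : Real.cos (φ + t*(-Real.pi - φ)) = Real.cos (-(φ + t*(-Real.pi - φ))) :=
          (Real.cos_neg _).symm
        rw [this, show Real.cos φ = Real.cos (-φ) from (Real.cos_neg _).symm]
        apply Real.cos_le_cos_of_nonneg_of_le_pi (by linarith)
        · nlinarith [ht.1, ht.2]
        · nlinarith [ht.1, ht.2]
    constructor
    · apply sq_lt_one (norm_nonneg _)
      rw [norm_sq_polar]
      have hx' : ‖x‖^2 = ρ^2 + r^2 + 2*ρ*r*Real.cos φ := by rw [hxρ]; exact norm_sq_polar ρ r φ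
      nlinarith [hx1, norm_nonneg x, mul_le_mul_of_nonneg_left hcos (by positivity : (0:ℝ) ≤ 2*ρ*r)]
    · have : (ρ : ℂ) + r * Complex.exp (((φ + t*(s - φ) : ℝ) : ℂ) * I) - ρ
          = r * Complex.exp (((φ + t*(s - φ) : ℝ) : ℂ) * I) := by ring
      rw [this, norm_mul]
      rw [Complex.norm_exp_ofReal_mul_I]
      rw [Complex.norm_real, Real.norm_of_nonneg hr0]; simpa using hx2
  · exact ⟨0, by simp, by rw [hxρ]; norm_num⟩
  · refine ⟨1, by simp, ?_⟩
    show (ρ : ℂ) + r * Complex.exp (((φ + 1*(s - φ) : ℝ) : ℂ) * I) = ρ - r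
    have h1 : φ + 1*(s - φ) = s := by ring
    rw [h1]
    have : Complex.exp ((s : ℂ) * I) = -1 := by
      rcases le_or_gt 0 φ with h0 | h0
      · simp [hs, h0, Complex.exp_pi_mul_I]
      · have hs' : s = -Real.pi := by simp [hs, not_le.mpr h0]
        rw [hs']
        push_cast
        rw [neg_mul, Complex.exp_neg, Complex.exp_pi_mul_I]
        norm_num
    rw [this]
    push_cast
    ring

lemma annulus_real (ρ R : ℝ) (hρ : 0 ≤ ρ) :
    IsPreconnected {z : ℂ | ‖z‖ < 1 ∧ R < ‖z - ρ‖} := by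
  apply isPreconnected_of_forall_pair
  rintro x ⟨hx1, hx2⟩ y ⟨hy1, hy2⟩
  obtain ⟨tx, htxc, htxm, hxtx, hxend⟩ := arc_spec ρ R hρ x hx1 hx2
  obtain ⟨ty, htyc, htym, hyty, hyend⟩ := arc_spec ρ R hρ y hy1 hy2
  set rx : ℝ := ‖x - ρ‖
  set ry : ℝ := ‖y - ρ‖
  have hrx1 : rx < 1 + ρ := by
    calc rx ≤ ‖x‖ + ‖(ρ:ℂ)‖ := norm_sub_le _ _
    _ < 1 + ρ := by rw [Complex.norm_real, Real.norm_of_nonneg hρ]; linarith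
  have hrx2 : ρ - 1 < rx := by
    have h' : ‖(ρ:ℂ)‖ ≤ ‖x‖ + rx := by
      have := norm_sub_le x (x - ρ)
      simpa using this
    rw [Complex.norm_real, Real.norm_of_nonneg hρ] at h'
    linarith
  have hry1 : ry < 1 + ρ := by
    calc ry ≤ ‖y‖ + ‖(ρ:ℂ)‖ := norm_sub_le _ _
    _ < 1 + ρ := by rw [Complex.norm_real, Real.norm_of_nonneg hρ]; linarith
  have hry2 : ρ - 1 < ry := by
    have h' : ‖(ρ:ℂ)‖ ≤ ‖y‖ + ry := by
      have := norm_sub_le y (y - ρ)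
      simpa using this
    rw [Complex.norm_real, Real.norm_of_nonneg hρ] at h'
    linarith
  set seg : Set ℂ := (fun t : ℝ => (ρ : ℂ) - (((1-t)*rx + t*ry : ℝ) : ℂ)) '' Icc 0 1 with hseg
  have hsegc : IsPreconnected seg := by
    apply IsPreconnected.image isPreconnected_Icc
    apply Continuous.continuousOn; fun_prop
  have hsegm : ∀ w ∈ seg, ‖w‖ < 1 ∧ R < ‖w - ρ‖ := by
    rintro w ⟨t, ht, rfl⟩
    have ht0 := ht.1; have ht1 := ht.2
    set rt : ℝ := (1-t)*rx + t*ry with hrt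
    have hub : rt ≤ max rx ry := by
      rcases le_total rx ry with h | h
      · rw [max_eq_right h]; nlinarith
      · rw [max_eq_left h]; nlinarith
    have hlb : min rx ry ≤ rt := by
      rcases le_total rx ry with h | h
      · rw [min_eq_left h]; nlinarith
      · rw [min_eq_right h]; nlinarith
    have hrt1 : rt < 1 + ρ := lt_of_le_of_lt hub (max_lt hrx1 hry1)
    have hrt2 : ρ - 1 < rt := lt_of_lt_of_le (lt_min hrx2 hry2) hlb
    have hrtR : R < rt := lt_of_lt_of_le (lt_min hx2 hy2) hlb
    have hrt0 : 0 ≤ rt := le_trans (le_min (norm_nonneg _) (norm_nonneg _)) hlb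
    refine ⟨show ‖(ρ:ℂ) - ((rt:ℝ):ℂ)‖ < 1 from ?_, show R < ‖(ρ:ℂ) - ((rt:ℝ):ℂ) - ρ‖ from ?_⟩
    · have h' : (ρ : ℂ) - (rt : ℂ) = ((ρ - rt : ℝ) : ℂ) := by push_cast; ring
      rw [h', Complex.norm_real, Real.norm_eq_abs, abs_lt]
      constructor <;> linarith
    · have h' : (ρ : ℂ) - (rt : ℂ) - ρ = ((-rt : ℝ) : ℂ) := by push_cast; ring
      rw [h', Complex.norm_real, Real.norm_eq_abs, abs_neg, _root_.abs_of_nonneg hrt0]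
      exact hrtR
  refine ⟨tx ∪ (seg ∪ ty), ?_, ?_, ?_, ?_⟩
  · intro w hw
    rcases hw with h | h | h
    exacts [htxm w h, hsegm w h, htym w h]
  · left; exact hxtx
  · right; right; exact hyty
  · apply IsPreconnected.union ((ρ:ℂ) - (rx:ℝ)) hxend
    · left; exact ⟨0, by simp, by norm_num⟩
    · exact htxc
    · apply IsPreconnected.union ((ρ:ℂ) - (ry:ℝ)) _ hyend hsegc htyc
      exact ⟨1, by simp, by norm_num⟩

lemma annulus_conn (c : ℂ) (R : ℝ) :
    IsPreconnected {z : ℂ | ‖z‖ < 1 ∧ R < ‖z - c‖} := by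
  set ω : ℂ := if c = 0 then 1 else c / ‖c‖ with hω
  have hω1 : ‖ω‖ = 1 := by
    rcases eq_or_ne c 0 with h | h
    · simp [hω, h]
    · rw [hω, if_neg h]
      rw [norm_div, Complex.norm_real, Real.norm_of_nonneg (norm_nonneg c)]
      exact div_self (norm_ne_zero_iff.mpr h)
  have hωc : ω * (‖c‖ : ℂ) = c := by
    rcases eq_or_ne c 0 with h | h
    · simp [h]
    · rw [hω, if_neg h]
      have h2 : (‖c‖ : ℂ) ≠ 0 := by
        simpa using norm_ne_zero_iff.mpr h
      exact div_mul_cancel₀ c h2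
  have : {z : ℂ | ‖z‖ < 1 ∧ R < ‖z - c‖} = (fun z => ω * z) '' {z : ℂ | ‖z‖ < 1 ∧ R < ‖z - (‖c‖ : ℝ)‖} := by
    ext w
    constructor
    · rintro ⟨h1, h2⟩
      refine ⟨w / ω, ⟨?_, ?_⟩, ?_⟩
      · rw [norm_div, hω1, div_one]; exact h1
      · have hωne : ω ≠ 0 := by intro h; rw [h] at hω1; simp at hω1
        have : ω * (w / ω - (‖c‖:ℂ)) = w - c := by
          rw [mul_sub, mul_div_cancel₀ _ hωne, hωc]
        calc R < ‖w - c‖ := h2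
        _ = ‖ω * (w / ω - (‖c‖:ℂ))‖ := by rw [this]
        _ = ‖w / ω - (‖c‖:ℂ)‖ := by rw [norm_mul, hω1, one_mul]
      · have hωne : ω ≠ 0 := by intro h; rw [h] at hω1; simp at hω1
        show ω * (w / ω) = w
        rw [mul_div_cancel₀ _ hωne]
    · rintro ⟨z, ⟨h1, h2⟩, rfl⟩
      refine ⟨by rw [norm_mul, hω1, one_mul]; exact h1, ?_⟩
      have : ω * z - c = ω * (z - (‖c‖:ℂ)) := by rw [mul_sub, hωc]
      rw [this, norm_mul, hω1, one_mul]
      exact h2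
  rw [this]
  exact (annulus_real ‖c‖ R (norm_nonneg c)).image _ (Continuous.continuousOn (by fun_prop))

lemma norm_lt_iff_normSq {u v : ℂ} : ‖u‖ < ‖v‖ ↔ normSq u < normSq v := by
  rw [← Complex.sq_norm, ← Complex.sq_norm]
  exact (pow_lt_pow_iff_left₀ (norm_nonneg u) (norm_nonneg v) (by norm_num)).symm

lemma Fid_convex (α β γ x y : ℂ) (p : ℝ) :
    normSq (α + β*((p:ℂ)*x + (1-(p:ℂ))*y)) - normSq (γ - α*((p:ℂ)*x + (1-(p:ℂ))*y))
      = p * (normSq (α+β*x) - normSq (γ-α*x)) + (1-p) * (normSq (α+β*y) - normSq (γ-α*y))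
        + p*(1-p)*(normSq α - normSq β)*normSq (x-y) := by
  simp only [Complex.normSq_apply, mul_re, mul_im, add_re, add_im, sub_re, sub_im, one_re,
    one_im, ofReal_re, ofReal_im]
  ring

lemma Fid_sq (α β γ z : ℂ) :
    (normSq β - normSq α) * (normSq (α + β*z) - normSq (γ - α*z))
      = normSq (((normSq β - normSq α : ℝ) : ℂ)*z + conj (conj α * β + conj γ * α))
        - (normSq (conj α * β + conj γ * α)
            + (normSq β - normSq α)*(normSq γ - normSq α)) := by
  simp only [Complex.normSq_apply, mul_re, mul_im, add_re, add_im, sub_re, sub_im,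
    Complex.conj_re, Complex.conj_im, ofReal_re, ofReal_im]
  ring

lemma S_preconn (α β γ : ℂ) :
    IsPreconnected {z : ℂ | ‖z‖ < 1 ∧ ‖γ - α*z‖ < ‖α + β*z‖} := by
  by_cases hk : normSq β ≤ normSq α
  · -- convex case
    apply Convex.isPreconnected
    intro x hx y hy p q hp hq hpq
    have hq1 : q = 1 - p := by linarith
    subst hq1
    have hsm : p • x + (1-p) • y = (p:ℂ)*x + (1-(p:ℂ))*y := by
      push_cast
      rw [Complex.real_smul, Complex.real_smul]
      push_cast
      ring
    constructor
    · show ‖p • x + (1-p) • y‖ < 1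
      calc ‖p • x + (1-p) • y‖ ≤ ‖p • x‖ + ‖(1-p) • y‖ := norm_add_le _ _
      _ = p * ‖x‖ + (1-p) * ‖y‖ := by
          rw [norm_smul, norm_smul, Real.norm_of_nonneg hp, Real.norm_of_nonneg (by linarith)]
      _ < 1 := by
          rcases eq_or_lt_of_le hp with h0 | h0
          · rw [← h0]; simpa using hy.1
          · nlinarith [mul_lt_mul_of_pos_left hx.1 h0,
              mul_le_mul_of_nonneg_left hy.1.le hq]
    · show ‖γ - α*(p • x + (1-p) • y)‖ < ‖α + β*(p • x + (1-p) • y)‖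
      rw [hsm, norm_lt_iff_normSq]
      have h1 : normSq (γ - α*x) < normSq (α + β*x) := norm_lt_iff_normSq.mp hx.2
      have h2 : normSq (γ - α*y) < normSq (α + β*y) := norm_lt_iff_normSq.mp hy.2
      have hid := Fid_convex α β γ x y p
      have hthird : 0 ≤ p*(1-p)*(normSq α - normSq β)*normSq (x-y) :=
        mul_nonneg (mul_nonneg (mul_nonneg hp hq) (by linarith)) (normSq_nonneg _)
      have hcomb : 0 < p * (normSq (α+β*x) - normSq (γ-α*x))
          + (1-p) * (normSq (α+β*y) - normSq (γ-α*y)) := by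
        rcases eq_or_lt_of_le hp with h0 | h0
        · rw [← h0]; simpa using sub_pos.mpr h2
        · have hpx : 0 < p * (normSq (α+β*x) - normSq (γ-α*x)) :=
            mul_pos h0 (sub_pos.mpr h1)
          have hpy : 0 ≤ (1-p) * (normSq (α+β*y) - normSq (γ-α*y)) :=
            mul_nonneg hq (le_of_lt (sub_pos.mpr h2))
          linarith
      linarith
  · push_neg at hk
    set k : ℝ := normSq β - normSq α with hkdef
    have hk0 : 0 < k := by simp [hkdef]; linarith
    set e : ℂ := conj α * β + conj γ * α with hedef
    set T : ℝ := normSq e + k*(normSq γ - normSq α) with hTdef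
    set c₀ : ℂ := -conj e / (k:ℂ) with hc₀
    have hkc : ((k:ℝ):ℂ) ≠ 0 := by
      simpa using ne_of_gt hk0
    have hfac : ∀ z : ℂ, ((k:ℝ):ℂ)*z + conj e = ((k:ℝ):ℂ) * (z - c₀) := by
      intro z
      rw [hc₀]
      field_simp
      ring
    have hn : ∀ z : ℂ, ‖z - c₀‖^2 = normSq (z - c₀) := fun z => by
      rw [Complex.sq_norm]
    have hiff : ∀ z : ℂ, (‖γ - α*z‖ < ‖α + β*z‖ ↔ T / k^2 < ‖z - c₀‖^2) := by
      intro z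
      rw [norm_lt_iff_normSq]
      have hid := Fid_sq α β γ z
      rw [hfac z] at hid
      rw [Complex.normSq_mul, Complex.normSq_ofReal] at hid
      rw [← hedef, ← hkdef] at hid
      rw [← hTdef] at hid
      rw [div_lt_iff₀ (by positivity : (0:ℝ) < k^2), hn z]
      constructor
      · intro h
        have h2 : 0 < k * (normSq (α + β*z) - normSq (γ - α*z)) :=
          mul_pos hk0 (sub_pos.mpr h)
        nlinarith
      · intro h
        by_contra hF
        push_neg at hF
        nlinarith [mul_nonneg hk0.le (sub_nonneg.mpr hF)]
    by_cases hT : 0 ≤ T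
    · have hset : {z : ℂ | ‖z‖ < 1 ∧ ‖γ - α*z‖ < ‖α + β*z‖}
          = {z : ℂ | ‖z‖ < 1 ∧ Real.sqrt (T/k^2) < ‖z - c₀‖} := by
        ext z
        simp only [mem_setOf_eq, hiff z]
        constructor
        · rintro ⟨h1, h2⟩
          refine ⟨h1, ?_⟩
          have hpos : 0 < ‖z - c₀‖ := by
            by_contra hc
            push_neg at hc
            have : ‖z - c₀‖ = 0 := le_antisymm hc (norm_nonneg _)
            rw [this] at h2
            have : (0:ℝ) ≤ T / k^2 := by positivity
            nlinarith
          rw [Real.sqrt_lt' hpos]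
          rw [div_lt_iff₀ (by positivity : (0:ℝ) < k^2)] at h2 ⊢
          exact h2
        · rintro ⟨h1, h2⟩
          refine ⟨h1, ?_⟩
          have hpos : 0 < ‖z - c₀‖ := lt_of_le_of_lt (Real.sqrt_nonneg _) h2
          rw [Real.sqrt_lt' hpos] at h2
          exact h2
      rw [hset]
      exact annulus_conn c₀ _
    · push_neg at hT
      have hset : {z : ℂ | ‖z‖ < 1 ∧ ‖γ - α*z‖ < ‖α + β*z‖} = {z : ℂ | ‖z‖ < 1} := by
        ext z
        simp only [mem_setOf_eq, hiff z]
        refine ⟨fun h => h.1, fun h => ⟨h, ?_⟩⟩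
        have : (0:ℝ) ≤ ‖z - c₀‖^2 := by positivity
        have hk2 : T / k^2 < 0 := div_neg_of_neg_of_pos hT (by positivity)
        linarith
      rw [hset]
      apply Convex.isPreconnected
      have : {z : ℂ | ‖z‖ < 1} = Metric.ball (0:ℂ) 1 := by
        ext z; simp [Metric.mem_ball, dist_eq_norm]
      rw [this]
      exact convex_ball 0 1

lemma key (α β γ : ℂ) (h : α ≠ 0 ∨ β ≠ 0)
    (hne : (symBidisc ∩ {p : ℂ × ℂ | α*p.1 + β*p.2 = γ}).Nonempty) :
    IsConnected (symBidisc ∩ {p : ℂ × ℂ | α*p.1 + β*p.2 = γ}) := by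
  by_cases hdeg : β ≠ 0 ∧ α^2 + β*γ = 0
  · obtain ⟨hβ, hd2⟩ := hdeg
    set c : ℂ := -α/β with hc
    have hc1 : ‖c‖ < 1 := by
      obtain ⟨p, ⟨z, w, hz, hw, rfl⟩, hpl⟩ := hne
      simp only [mem_setOf_eq] at hpl
      have hfact : (β*z+α)*(β*w+α) = 0 := by linear_combination β*hpl + hd2
      rcases mul_eq_zero.mp hfact with h0 | h0
      · have : z = c := by rw [hc]; field_simp; linear_combination h0
        rw [← this]; simpa [mem_ball, dist_eq_norm] using hz
      · have : w = c := by rw [hc]; field_simp; linear_combination h0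
        rw [← this]; simpa [mem_ball, dist_eq_norm] using hw
    have hset : symBidisc ∩ {p : ℂ × ℂ | α*p.1 + β*p.2 = γ}
        = (fun w : ℂ => (c + w, c*w)) '' ball (0:ℂ) 1 := by
      ext p
      constructor
      · rintro ⟨⟨z, w, hz, hw, rfl⟩, hpl⟩
        simp only [mem_setOf_eq] at hpl
        have hfact : (β*z+α)*(β*w+α) = 0 := by linear_combination β*hpl + hd2
        rcases mul_eq_zero.mp hfact with h0 | h0
        · have hzc : z = c := by rw [hc]; field_simp; linear_combination h0
          exact ⟨w, hw, by rw [hzc]⟩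
        · have hwc : w = c := by rw [hc]; field_simp; linear_combination h0
          exact ⟨z, hz, by rw [hwc]; simp [add_comm, mul_comm]⟩
      · rintro ⟨w, hw, rfl⟩
        refine ⟨⟨c, w, by simpa [mem_ball, dist_eq_norm] using hc1, hw, rfl⟩, ?_⟩
        show α*(c+w) + β*(c*w) = γ
        rw [hc]
        field_simp
        linear_combination -hd2
    rw [hset]
    apply IsConnected.image
    · exact ⟨Metric.nonempty_ball.mpr one_pos, (convex_ball (0:ℂ) 1).isPreconnected⟩
    · apply Continuous.continuousOn; fun_prop
  · set S : Set ℂ := {z : ℂ | ‖z‖ < 1 ∧ ‖γ - α*z‖ < ‖α + β*z‖} with hS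
    set g : ℂ → ℂ × ℂ :=
      fun z => (z + (γ - α*z)/(α + β*z), z*((γ - α*z)/(α + β*z))) with hg
    have hdenS : ∀ z ∈ S, α + β*z ≠ 0 := by
      intro z hzS
      have : 0 < ‖α + β*z‖ := lt_of_le_of_lt (norm_nonneg (γ - α*z)) hzS.2
      exact norm_pos_iff.mp this
    have hset : symBidisc ∩ {p : ℂ × ℂ | α*p.1 + β*p.2 = γ} = g '' S := by
      ext p
      constructor
      · rintro ⟨⟨z, w, hz, hw, rfl⟩, hpl⟩
        simp only [mem_setOf_eq] at hpl
        rw [mem_ball, dist_eq_norm, sub_zero] at hz hw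
        have hden : α + β*z ≠ 0 := by
          intro h0
          have hγ : γ = α*z := by linear_combination -hpl + w*h0
          have hβ : β ≠ 0 := by
            intro hβ0
            rcases h with hα | hβ'
            · rw [hβ0, zero_mul, add_zero] at h0; exact hα h0
            · exact hβ' hβ0
          exact hdeg ⟨hβ, by rw [hγ]; linear_combination α*h0⟩
        have hw' : w = (γ - α*z)/(α + β*z) := by
          rw [eq_div_iff hden]
          linear_combination hpl
        refine ⟨z, ⟨hz, ?_⟩, ?_⟩
        · have : γ - α*z = w*(α + β*z) := by linear_combination -hpl
          rw [this, norm_mul]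
          have hp : 0 < ‖α + β*z‖ := norm_pos_iff.mpr hden
          calc ‖w‖ * ‖α + β*z‖ < 1 * ‖α + β*z‖ := by
                exact mul_lt_mul_of_pos_right hw hp
          _ = ‖α + β*z‖ := one_mul _
        · rw [hg]
          simp only
          rw [← hw']
      · rintro ⟨z, hzS, rfl⟩
        have hden := hdenS z hzS
        have hw1 : ‖(γ - α*z)/(α + β*z)‖ < 1 := by
          rw [norm_div]
          rw [div_lt_one (lt_of_le_of_lt (norm_nonneg (γ - α*z)) hzS.2)]
          exact hzS.2
        refine ⟨⟨z, (γ - α*z)/(α + β*z), ?_, ?_, rfl⟩, ?_⟩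
        · rw [mem_ball, dist_eq_norm, sub_zero]; exact hzS.1
        · rw [mem_ball, dist_eq_norm, sub_zero]; exact hw1
        · show α*(z + (γ - α*z)/(α + β*z)) + β*(z*((γ - α*z)/(α + β*z))) = γ
          have key : (γ - α*z)/(α + β*z) * (α + β*z) = γ - α*z := div_mul_cancel₀ _ hden
          linear_combination key
    rw [hset]
    have hgc : ContinuousOn g S := by
      apply ContinuousOn.prodMk
      · exact (continuousOn_id.add (((continuousOn_const.sub
          (continuousOn_const.mul continuousOn_id)).div
          (continuousOn_const.add (continuousOn_const.mul continuousOn_id)) hdenS)))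
      · exact (continuousOn_id.mul (((continuousOn_const.sub
          (continuousOn_const.mul continuousOn_id)).div
          (continuousOn_const.add (continuousOn_const.mul continuousOn_id)) hdenS)))
    refine ⟨?_, (S_preconn α β γ).image g hgc⟩
    rw [hset] at hne
    exact hne
end SymBidiscAux

/-- The intersection of the symmetrized bidisc with any complex affine line is
connected whenever it is nonempty. -/
theorem symBidisc_inter_line_connected (a v : ℂ × ℂ) (hv : v ≠ 0)
    (L : Set (ℂ × ℂ)) (hL : L = {p | ∃ lam : ℂ, p = a + lam • v})
    (hne : (symBidisc ∩ L).Nonempty) :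
    IsConnected (symBidisc ∩ L) := by
  have hL' : L = {p : ℂ × ℂ | v.2*p.1 + (-v.1)*p.2 = v.2*a.1 - v.1*a.2} := by
    rw [hL]
    ext p
    constructor
    · rintro ⟨lam, rfl⟩
      show v.2*(a + lam • v).1 + (-v.1)*(a + lam • v).2 = v.2*a.1 - v.1*a.2
      simp only [Prod.fst_add, Prod.snd_add, Prod.smul_fst, Prod.smul_snd, smul_eq_mul]
      ring
    · intro hp
      simp only [mem_setOf_eq] at hp
      by_cases h1 : v.1 = 0
      · have h2 : v.2 ≠ 0 := by
          intro h2
          exact hv (Prod.ext h1 h2)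
      -- p.1 = a.1
        have hp1 : p.1 = a.1 := by
          rw [h1] at hp
          have hp' : v.2 * (p.1 - a.1) = 0 := by linear_combination hp
          exact sub_eq_zero.mp ((mul_eq_zero.mp hp').resolve_left h2)
        refine ⟨(p.2 - a.2)/v.2, ?_⟩
        apply Prod.ext
        · simp [h1, hp1]
        · show p.2 = a.2 + (p.2 - a.2)/v.2 * v.2
          field_simp
          ring
      · refine ⟨(p.1 - a.1)/v.1, ?_⟩
        apply Prod.ext
        · show p.1 = a.1 + (p.1 - a.1)/v.1 * v.1
          field_simp
          ring
        · show p.2 = a.2 + (p.1 - a.1)/v.1 * v.2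
          field_simp
          linear_combination -hp
  rw [hL'] at hne ⊢
  apply key
  · by_contra hc
    push_neg at hc
    apply hv
    apply Prod.ext
    · simpa using hc.2
    · exact hc.1
  · exact hne
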